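/- For every set H ⊆ ℝ² and every index i, there is at most one point of H that is simultaneously an E_i-boundary point and an E_{i+1}-boundary point of H; that is, if p and q are both E_i-boundary points and E_{i+1}-boundary points of H, then p = q. -/

import Mathlib

noncomputable section

/-- The planar cross product of two vectors in `ℝ × ℝ`. -/
def cross (a b : ℝ × ℝ) : ℝ := a.1 * b.2 - a.2 * b.1

/-- The vertices `v 1, …, v m` (indexed cyclically) are in strictly convex position,
listed in clockwise order: for every directed edge `v i → v (i+1)`, all other
vertices lie strictly on its right side. -/
def ClockwiseConvex {m : ℕ} (v : ZMod m → ℝ × ℝ) : Prop :=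
  ∀ i j : ZMod m, j ≠ i → j ≠ i + 1 → cross (v (i + 1) - v i) (v j - v i) < 0

/-- Central symmetry: there is a center `c` with `v (i + n) = 2 c - v i` for all `i`. -/
def CentSym (n : ℕ) (v : ZMod (2 * n) → ℝ × ℝ) : Prop :=
  ∃ c : ℝ × ℝ, ∀ i : ZMod (2 * n), v (i + (n : ZMod (2 * n))) = (2 : ℝ) • c - v i

/-- The translate `E_i(p)` of the closed wedge
`E_i = {s • (v (i-1) - v i) + t • (v (i+1) - v i) : s, t ≥ 0}` with apex at `p`. -/
def Wedge {m : ℕ} (v : ZMod m → ℝ × ℝ) (i : ZMod m) (p : ℝ × ℝ) : Set (ℝ × ℝ) :=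
  {x | ∃ s t : ℝ, 0 ≤ s ∧ 0 ≤ t ∧ x = p + s • (v (i - 1) - v i) + t • (v (i + 1) - v i)}

/-- `p` is an `E_i`-boundary point of `H`: `p ∈ H` and `E_i(p) ∩ H = {p}`. -/
def IsBd {m : ℕ} (v : ZMod m → ℝ × ℝ) (H : Set (ℝ × ℝ)) (i : ZMod m) (p : ℝ × ℝ) : Prop :=
  p ∈ H ∧ Wedge v i p ∩ H = {p}

lemma zmod_cast_ne (n k : ℕ) (h1 : 0 < k) (h2 : k < 2*n) :
    ((k : ℕ) : ZMod (2*n)) ≠ 0 := by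
  have : NeZero (2*n) := ⟨by omega⟩
  intro h
  rw [ZMod.natCast_eq_zero_iff] at h
  have := Nat.le_of_dvd h1 h
  omega

lemma exists_coeffs {A B d : ℝ × ℝ} (hAB : 0 < cross A B)
    (h1 : 0 ≤ cross A d) (h2 : 0 ≤ cross d B) :
    ∃ s t : ℝ, 0 ≤ s ∧ 0 ≤ t ∧ d = s • A + t • B := by
  refine ⟨cross d B / cross A B, cross A d / cross A B,
    div_nonneg h2 hAB.le, div_nonneg h1 hAB.le, ?_⟩
  have h0 : cross A B ≠ 0 := ne_of_gt hAB
  rw [Prod.ext_iff]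
  constructor
  · simp only [cross, Prod.smul_fst, Prod.fst_add, smul_eq_mul] at *
    rw [div_mul_eq_mul_div, div_mul_eq_mul_div, ← add_div, eq_div_iff h0]; ring
  · simp only [cross, Prod.smul_snd, Prod.snd_add, smul_eq_mul] at *
    rw [div_mul_eq_mul_div, div_mul_eq_mul_div, ← add_div, eq_div_iff h0]; ring

lemma scalar_key {X Y Z K M W : ℝ} (hX : X < 0) (hY : Y < 0) (hK : K - X < 0)
    (hM : M + 2*X < 0) (hW : W + 2*Z + Y < 0) (hP : X*W - Z*M + K*Y = 0) : Z ≤ 0 := by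
  by_contra h
  push_neg at h
  have h1 : 0 < X*(W+2*Z+Y) := mul_pos_of_neg_of_neg hX hW
  have h2 : 0 < Y*(K-X) := mul_pos_of_neg_of_neg hY hK
  have h3 : Z*(M+2*X) < 0 := mul_neg_of_pos_of_neg h (by linarith)
  nlinarith [h1, h2, h3, hP]

lemma key_geom (P1 P2 P3 P4 c0 : ℝ × ℝ)
    (hX' : cross (P2 - P1) (P3 - P1) < 0)
    (hY' : cross (P3 - P2) (P4 - P2) < 0)
    (hK' : cross (P2 - P1) (((2:ℝ) • c0 - P3) - P1) < 0)
    (hM' : cross (P3 - P2) (((2:ℝ) • c0 - P2) - P2) < 0)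
    (hW' : cross (P4 - P3) (((2:ℝ) • c0 - P2) - P3) < 0) :
    cross (P2 - P1) (P4 - P3) ≤ 0 := by
  apply scalar_key (X := cross (P2-P1) (P3-P2)) (Y := cross (P3-P2) (P4-P3))
    (K := cross (P2-P1) ((2:ℝ)•c0 - P1 - P1)) (M := cross (P3-P2) ((2:ℝ)•c0 - P1 - P1))
    (W := cross (P4-P3) ((2:ℝ)•c0 - P1 - P1))
  · have : cross (P2 - P1) (P3 - P1) = cross (P2-P1) (P3-P2) := by simp [cross]; ring
    linarith
  · have : cross (P3 - P2) (P4 - P2) = cross (P3-P2) (P4-P3) := by simp [cross]; ring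
    linarith
  · have : cross (P2 - P1) (((2:ℝ) • c0 - P3) - P1)
        = cross (P2-P1) ((2:ℝ)•c0 - P1 - P1) - cross (P2-P1) (P3-P2) := by
      simp [cross]; ring
    linarith
  · have : cross (P3 - P2) (((2:ℝ) • c0 - P2) - P2)
        = cross (P3-P2) ((2:ℝ)•c0 - P1 - P1) + 2*cross (P2-P1) (P3-P2) := by
      simp [cross]; ring
    linarith
  · have : cross (P4 - P3) (((2:ℝ) • c0 - P2) - P3)
        = cross (P4-P3) ((2:ℝ)•c0 - P1 - P1) + 2*cross (P2-P1) (P4-P3)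
          + cross (P3-P2) (P4-P3) := by
      simp [cross]; ring
    linarith
  · simp [cross]; ring

lemma not_in_wedge {m : ℕ} (v : ZMod m → ℝ × ℝ) (H : Set (ℝ×ℝ)) (i : ZMod m) (p q : ℝ×ℝ)
    (hp : IsBd v H i p) (hqH : q ∈ H) (hne : q ≠ p)
    (hAB : 0 < cross (v (i-1) - v i) (v (i+1) - v i))
    (h1 : 0 ≤ cross (v (i-1) - v i) (q - p))
    (h2 : 0 ≤ cross (q - p) (v (i+1) - v i)) : False := by
  obtain ⟨s, t, hs0, ht0, hd⟩ := exists_coeffs hAB h1 h2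
  have hmem : q ∈ Wedge v i p := by
    refine ⟨s, t, hs0, ht0, ?_⟩
    rw [add_assoc, ← hd]
    abel
  have : q ∈ ({p} : Set (ℝ×ℝ)) := hp.2 ▸ Set.mem_inter hmem hqH
  exact hne this

/-- For any `H ⊆ ℝ²` there is at most one point that is simultaneously an
`E_i`-boundary point and an `E_{i+1}`-boundary point of `H`. -/
theorem double_boundary_unique
    (n : ℕ) (hn : 2 ≤ n) (v : ZMod (2 * n) → ℝ × ℝ)
    (hcw : ClockwiseConvex v) (hsym : CentSym n v)
    (H : Set (ℝ × ℝ)) (i : ZMod (2 * n)) (p q : ℝ × ℝ)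
    (hp : IsBd v H i p) (hp' : IsBd v H (i + 1) p)
    (hq : IsBd v H i q) (hq' : IsBd v H (i + 1) q) :
    p = q := by
  obtain ⟨c0, hs⟩ := hsym
  by_contra hne
  -- basic nonzero facts in ZMod (2*n)
  have h1z : (1 : ZMod (2*n)) ≠ 0 := by
    intro h; apply zmod_cast_ne n 1 (by omega) (by omega); push_cast; exact h
  have h2z : (2 : ZMod (2*n)) ≠ 0 := by
    intro h; apply zmod_cast_ne n 2 (by omega) (by omega); push_cast; exact h
  have e1 : i - 1 + 1 = i := by ring
  -- X < 0
  have hXraw := hcw (i-1) (i+1)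
    (fun h => h2z (by linear_combination h)) (by rw [e1]; exact fun h => h1z (by linear_combination h))
  rw [e1] at hXraw
  have hX : cross (v i - v (i-1)) (v (i+1) - v i) < 0 := by
    have : cross (v i - v (i-1)) (v (i+1) - v (i-1))
        = cross (v i - v (i-1)) (v (i+1) - v i) := by simp [cross]; ring
    linarith [hXraw]
  -- Y < 0
  have hY : cross (v (i+1) - v i) (v (i+2) - v (i+1)) < 0 := by
    have hYraw := hcw i (i+2)
      (fun h => h2z (by linear_combination h)) (fun h => h1z (by linear_combination h))
    have : cross (v (i+1) - v i) (v (i+2) - v i)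
        = cross (v (i+1) - v i) (v (i+2) - v (i+1)) := by simp [cross]; ring
    linarith [hYraw]
  -- Z ≤ 0
  have hZ : cross (v i - v (i-1)) (v (i+2) - v (i+1)) ≤ 0 := by
    rcases eq_or_lt_of_le hn with hn2 | hn3
    · -- n = 2
      have hc2 : (n : ZMod (2*n)) = 2 := by rw [← hn2]; push_cast; ring
      have hv2 : v (i+2) = (2:ℝ) • c0 - v i := by rw [← hc2]; exact hs i
      have hv1 : v (i+1) = (2:ℝ) • c0 - v (i-1) := by
        have : i + 1 = (i - 1) + (n : ZMod (2*n)) := by rw [hc2]; ring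
        rw [this]; exact hs (i-1)
      have : cross (v i - v (i-1)) (v (i+2) - v (i+1)) = 0 := by
        rw [hv1, hv2]; simp [cross]; ring
      linarith
    · -- 2 < n
      have hn1z : (n : ZMod (2*n)) + 1 ≠ 0 := by
        intro h; apply zmod_cast_ne n (n+1) (by omega) (by omega); push_cast
        linear_combination h
      have hn2z : (n : ZMod (2*n)) + 2 ≠ 0 := by
        intro h; apply zmod_cast_ne n (n+2) (by omega) (by omega); push_cast
        linear_combination h
      have hnz : (n : ZMod (2*n)) ≠ 0 := by
        intro h; apply zmod_cast_ne n n (by omega) (by omega); exact h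
      have hnne1 : (n : ZMod (2*n)) ≠ 1 := by
        intro h
        apply zmod_cast_ne n (n-1) (by omega) (by omega)
        push_cast [Nat.cast_sub (by omega : 1 ≤ n)]
        linear_combination h
      have hnne2 : (n : ZMod (2*n)) ≠ 2 := by
        intro h
        apply zmod_cast_ne n (n-2) (by omega) (by omega)
        push_cast [Nat.cast_sub (by omega : 2 ≤ n)]
        linear_combination h
      -- hcw instances
      have hK' := hcw (i-1) (i+1+(n : ZMod (2*n)))
        (fun h => hn2z (by linear_combination h))
        (by rw [e1]; exact fun h => hn1z (by linear_combination h))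
      rw [e1, hs (i+1)] at hK'
      have hM' := hcw i (i+(n : ZMod (2*n)))
        (fun h => hnz (by linear_combination h))
        (fun h => hnne1 (by linear_combination h))
      rw [hs i] at hM'
      have hW' := hcw (i+1) (i+(n : ZMod (2*n)))
        (fun h => hnne1 (by linear_combination h))
        (fun h => hnne2 (by linear_combination h))
      rw [hs i, show i+1+1 = i+2 from by ring] at hW'
      exact key_geom (v (i-1)) (v i) (v (i+1)) (v (i+2)) c0 hXraw
        (by have := hcw i (i+2) (fun h => h2z (by linear_combination h))
              (fun h => h1z (by linear_combination h)); exact this)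
        hK' hM' hW'
  -- boundary point sign conditions
  have hABi : 0 < cross (v (i-1) - v i) (v (i+1) - v i) := by
    have : cross (v (i-1) - v i) (v (i+1) - v i)
        = -(cross (v i - v (i-1)) (v (i+1) - v i)) := by simp [cross]; ring
    linarith
  have hABi' : 0 < cross (v ((i+1)-1) - v (i+1)) (v ((i+1)+1) - v (i+1)) := by
    rw [show (i+1)-1 = i from by ring, show (i+1)+1 = i+2 from by ring]
    have : cross (v i - v (i+1)) (v (i+2) - v (i+1))
        = -(cross (v (i+1) - v i) (v (i+2) - v (i+1))) := by simp [cross]; ring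
    linarith
  set α := cross (v i - v (i-1)) (q - p) with hα
  set β := cross (v (i+1) - v i) (q - p) with hβ
  set γ := cross (v (i+2) - v (i+1)) (q - p) with hγ
  have notP1 : ¬(α ≤ 0 ∧ β ≤ 0) := by
    rintro ⟨ha, hb⟩
    refine not_in_wedge v H i p q hp hq.1 (fun h => hne h.symm) hABi ?_ ?_
    · have : cross (v (i-1) - v i) (q - p) = -α := by rw [hα]; simp [cross]; ring
      linarith
    · have : cross (q - p) (v (i+1) - v i) = -β := by rw [hβ]; simp [cross]; ring
      linarith
  have notP2 : ¬(0 ≤ α ∧ 0 ≤ β) := by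
    rintro ⟨ha, hb⟩
    refine not_in_wedge v H i q p hq hp.1 hne hABi ?_ ?_
    · have : cross (v (i-1) - v i) (p - q) = α := by rw [hα]; simp [cross]; ring
      linarith
    · have : cross (p - q) (v (i+1) - v i) = β := by rw [hβ]; simp [cross]; ring
      linarith
  have notP3 : ¬(β ≤ 0 ∧ γ ≤ 0) := by
    rintro ⟨hb, hg⟩
    refine not_in_wedge v H (i+1) p q hp' hq.1 (fun h => hne h.symm) hABi' ?_ ?_
    · rw [show (i+1)-1 = i from by ring]
      have : cross (v i - v (i+1)) (q - p) = -β := by rw [hβ]; simp [cross]; ring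
      linarith
    · rw [show (i+1)+1 = i+2 from by ring]
      have : cross (q - p) (v (i+2) - v (i+1)) = -γ := by rw [hγ]; simp [cross]; ring
      linarith
  have notP4 : ¬(0 ≤ β ∧ 0 ≤ γ) := by
    rintro ⟨hb, hg⟩
    refine not_in_wedge v H (i+1) q p hq' hp.1 hne hABi' ?_ ?_
    · rw [show (i+1)-1 = i from by ring]
      have : cross (v i - v (i+1)) (p - q) = β := by rw [hβ]; simp [cross]; ring
      linarith
    · rw [show (i+1)+1 = i+2 from by ring]
      have : cross (p - q) (v (i+2) - v (i+1)) = γ := by rw [hγ]; simp [cross]; ring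
      linarith
  -- Plücker identity
  have hplk : cross (v i - v (i-1)) (v (i+1) - v i) * γ
      - cross (v i - v (i-1)) (v (i+2) - v (i+1)) * β
      + α * cross (v (i+1) - v i) (v (i+2) - v (i+1)) = 0 := by
    rw [hα, hβ, hγ]; simp [cross]; ring
  rcases le_or_gt β 0 with hb | hb
  · have ha : 0 < α := by
      by_contra h; push_neg at h; exact notP1 ⟨h, hb⟩
    have hg : 0 < γ := by
      by_contra h; push_neg at h; exact notP3 ⟨hb, h⟩
    nlinarith [hplk, mul_neg_of_neg_of_pos hX hg, mul_neg_of_pos_of_neg ha hY,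
      mul_nonneg (neg_nonneg.2 hZ) (neg_nonneg.2 hb)]
  · have ha : α < 0 := by
      by_contra h; push_neg at h; exact notP2 ⟨h, hb.le⟩
    have hg : γ < 0 := by
      by_contra h; push_neg at h; exact notP4 ⟨hb.le, h⟩
    nlinarith [hplk, mul_pos_of_neg_of_neg hX hg, mul_pos_of_neg_of_neg ha hY,
      mul_nonneg (neg_nonneg.2 hZ) hb.le]
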